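/- For every ultrafilter U on ℕ that is multiplicatively idempotent and such that every U-large set contains distinct x, y, z with x + y = z, every set A ∈ U contains pairwise distinct elements a, b, c, d with a + b = c·d. In particular the polynomial x + y − zw is injectively partition regular on ℕ: for every finite coloring of ℕ∖{0} there exist pairwise distinct monochromatic a, b, c, d with a + b = c·d. -/

import Mathlib

/-- The product of ultrafilters on ℕ: `A ∈ uprod U V ↔ {n | {m | n * m ∈ A} ∈ V} ∈ U`. -/
def uprod (U V : Ultrafilter ℕ) : Ultrafilter ℕ :=
  U.bind fun n => V.map fun m => n * m

lemma mem_uprod {U V : Ultrafilter ℕ} {A : Set ℕ} :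
    A ∈ uprod U V ↔ {n | {m | n * m ∈ A} ∈ V} ∈ U := by
  show A ∈ Filter.bind ↑U (fun n => ↑(V.map fun m => n * m)) ↔ _
  rw [Filter.mem_bind']; rfl

lemma schur_not_finite {U : Ultrafilter ℕ}
    (hS : ∀ A ∈ U, ∃ x ∈ A, ∃ y ∈ A, ∃ z ∈ A, x ≠ y ∧ x ≠ z ∧ y ≠ z ∧ x + y = z)
    {F : Set ℕ} (hF : F.Finite) : F ∉ U := by
  intro hFU
  obtain ⟨a, -, rfl⟩ := Ultrafilter.eq_pure_of_finite_mem hF hFU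
  obtain ⟨x, hx, y, hy, z, hz, hxy, -⟩ := hS {a} rfl
  exact hxy (hx.trans hy.symm)

lemma main1 (U : Ultrafilter ℕ) (hU : uprod U U = U)
    (hS : ∀ A ∈ U, ∃ x ∈ A, ∃ y ∈ A, ∃ z ∈ A, x ≠ y ∧ x ≠ z ∧ y ≠ z ∧ x + y = z) :
    ∀ A ∈ U, ∃ a ∈ A, ∃ b ∈ A, ∃ c ∈ A, ∃ d ∈ A,
      a ≠ b ∧ a ≠ c ∧ a ≠ d ∧ b ≠ c ∧ b ≠ d ∧ c ≠ d ∧ a + b = c * d := by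
  intro A hA
  have h2 : {n : ℕ | 2 ≤ n} ∈ U := by
    rcases U.mem_or_compl_mem {n : ℕ | 2 ≤ n} with h | h
    · exact h
    · exfalso
      refine schur_not_finite hS ?_ h
      have : {n : ℕ | 2 ≤ n}ᶜ ⊆ Set.Iio 2 := by
        intro n hn; simpa using hn
      exact (Set.finite_Iio 2).subset this
  set A' := A ∩ {n : ℕ | 2 ≤ n} with hA'def
  have hA' : A' ∈ U := Filter.inter_mem hA h2
  have hAstar : {n | {m | n * m ∈ A'} ∈ U} ∈ U := mem_uprod.mp (by rw [hU]; exact hA')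
  obtain ⟨x, hx, y, hy, z, hz, hxy, hxz, hyz, hsum⟩ :=
    hS _ (Filter.inter_mem hA' hAstar)
  have hxA : x ∈ A' := hx.1
  have hyA : y ∈ A' := hy.1
  have hzA : z ∈ A' := hz.1
  have hx2 : 2 ≤ x := hxA.2
  have hy2 : 2 ≤ y := hyA.2
  set D := {m | x * m ∈ A'} ∩ ({m | y * m ∈ A'} ∩ A') with hDdef
  have hD : D ∈ U := Filter.inter_mem hx.2 (Filter.inter_mem hy.2 hA')
  have hDinf : D.Infinite := fun hfin => schur_not_finite hS hfin hD
  have hbadfin : ({z} ∪ ({m | x * m = z} ∪ {m | y * m = z}) : Set ℕ).Finite := by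
    refine (Set.finite_Iic z).subset ?_
    rintro m (rfl | hm | hm)
    · exact Set.mem_Iic.mpr le_rfl
    · simp only [Set.mem_setOf_eq] at hm
      calc m ≤ x * m := Nat.le_mul_of_pos_left m (by omega)
        _ = z := hm
    · simp only [Set.mem_setOf_eq] at hm
      calc m ≤ y * m := Nat.le_mul_of_pos_left m (by omega)
        _ = z := hm
  obtain ⟨d, hdD, hdbad⟩ := (hDinf.diff hbadfin).nonempty
  simp only [Set.mem_union, Set.mem_singleton_iff, Set.mem_setOf_eq, not_or] at hdbad
  obtain ⟨hdz, hxdz, hydz⟩ := hdbad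
  have hd2 : 2 ≤ d := hdD.2.2.2
  refine ⟨x * d, hdD.1.1, y * d, hdD.2.1.1, z, hzA.1, d, hdD.2.2.1, ?_, hxdz, ?_, hydz, ?_, fun h => hdz h.symm, ?_⟩
  · exact fun h => hxy (Nat.eq_of_mul_eq_mul_right (by omega) h)
  · intro h
    have : d < x * d := by calc d < 2 * d := by omega
                                _ ≤ x * d := Nat.mul_le_mul_right d hx2
    omega
  · intro h
    have : d < y * d := by calc d < 2 * d := by omega
                                _ ≤ y * d := Nat.mul_le_mul_right d hy2
    omega
  · rw [← hsum, add_mul]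

open Hindman

attribute [local instance] Ultrafilter.mul Ultrafilter.semigroup
  Ultrafilter.add Ultrafilter.addSemigroup

lemma uprod_eq_mul (U V : Ultrafilter ℕ) : uprod U V = U * V := by
  apply Ultrafilter.coe_inj.mp
  apply Filter.ext
  intro A
  rw [show (A ∈ (↑(U*V) : Filter ℕ)) ↔ _ from Ultrafilter.eventually_mul U V (· ∈ A)]
  exact mem_uprod

lemma FS_pos {c : Stream' ℕ} {m : ℕ} (hm : m ∈ FS c) : (∀ i, 1 ≤ c i) → 1 ≤ m := by
  induction hm with
  | head' a => exact fun h => h 0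
  | tail' a m h ih => exact fun hc => ih fun i => hc (i+1)
  | cons' a m h ih => intro hc; have := ih fun i => hc (i+1); have : (1:ℕ) ≤ a.head := hc 0; omega

/-- abbreviation for the Schur property of an ultrafilter -/
def IsSchurU (U : Ultrafilter ℕ) : Prop :=
  ∀ A ∈ U, ∃ x ∈ A, ∃ y ∈ A, ∃ z ∈ A, x ≠ y ∧ x ≠ z ∧ y ≠ z ∧ x + y = z

lemma exists_schur_ultrafilter : ∃ U : Ultrafilter ℕ, IsSchurU U := by
  obtain ⟨U, Uidem, hFS⟩ := Hindman.exists_idempotent_ultrafilter_le_FS (fun n => n + 1)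
  refine ⟨U, fun A hA => ?_⟩
  have hA' : A ∩ FS (fun n => n + 1) ∈ U := Filter.inter_mem hA hFS
  obtain ⟨b, hb⟩ := Hindman.exists_FS_of_large U Uidem _ hA'
  have hbpos : ∀ m ∈ FS b, 1 ≤ m := fun m hm =>
    FS_pos ((hb hm).2) (fun i => Nat.le_add_left 1 i)
  have h0 : b.head ∈ FS b := FS.head b
  have ht1 : b.tail.head + b.tail.tail.head ∈ FS b :=
    FS.tail b _ (FS.cons b.tail _ (FS.head b.tail.tail))
  have ht2 : b.tail.head + (b.tail.tail.head + b.tail.tail.tail.head) ∈ FS b :=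
    FS.tail b _ (FS.cons b.tail _ (FS.cons b.tail.tail _ (FS.head b.tail.tail.tail)))
  have hz1 : b.head + (b.tail.head + b.tail.tail.head) ∈ FS b :=
    FS.cons b _ (FS.cons b.tail _ (FS.head b.tail.tail))
  have hz2 : b.head + (b.tail.head + (b.tail.tail.head + b.tail.tail.tail.head)) ∈ FS b :=
    FS.cons b _ (FS.cons b.tail _ (FS.cons b.tail.tail _ (FS.head b.tail.tail.tail)))
  set x := b.head
  set t1 := b.tail.head + b.tail.tail.head
  set t2 := b.tail.head + (b.tail.tail.head + b.tail.tail.tail.head)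
  have hx1 : 1 ≤ x := hbpos _ h0
  have h3 : 1 ≤ b.tail.tail.tail.head := by
    have : b.tail.tail.tail.head ∈ FS b :=
      FS.tail b _ (FS.tail b.tail _ (FS.tail b.tail.tail _ (FS.head _)))
    exact hbpos _ this
  have ht1p : 1 ≤ t1 := hbpos _ ht1
  by_cases hxe : x = t1
  · refine ⟨x, (hb h0).1, t2, (hb ht2).1, x + t2, (hb hz2).1, ?_, ?_, ?_, rfl⟩
    · have : t2 = t1 + b.tail.tail.tail.head := by simp [t1, t2]; omega
      omega
    · have ht2p : 1 ≤ t2 := hbpos _ ht2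
      omega
    · omega
  · exact ⟨x, (hb h0).1, t1, (hb ht1).1, x + t1, (hb hz1).1, hxe, by omega, by omega, rfl⟩

lemma schur_mul {U V : Ultrafilter ℕ} (hU : IsSchurU U) (hV : IsSchurU V) :
    IsSchurU (U * V) := by
  intro A hA
  have hmem : {n | {m | n * m ∈ A} ∈ V} ∈ U := mem_uprod.mp (by rw [uprod_eq_mul]; exact hA)
  have h1 : {n : ℕ | 1 ≤ n} ∈ U := by
    rcases U.mem_or_compl_mem {n : ℕ | 1 ≤ n} with h | h
    · exact h
    · exact absurd h (schur_not_finite hU ((Set.finite_Iio 1).subset fun n hn => by simpa using hn))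
  obtain ⟨n, hn1, hn2⟩ := Ultrafilter.nonempty_of_mem (Filter.inter_mem h1 hmem)
  obtain ⟨x, hx, y, hy, z, hz, hxy, hxz, hyz, hsum⟩ := hV _ hn2
  have hn : 1 ≤ n := hn1
  refine ⟨n * x, hx, n * y, hy, n * z, hz, ?_, ?_, ?_, by rw [← Nat.mul_add, hsum]⟩
  · exact fun h => hxy (Nat.eq_of_mul_eq_mul_left (by omega) h)
  · exact fun h => hxz (Nat.eq_of_mul_eq_mul_left (by omega) h)
  · exact fun h => hyz (Nat.eq_of_mul_eq_mul_left (by omega) h)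

lemma exists_mul_idem_schur :
    ∃ U : Ultrafilter ℕ, uprod U U = U ∧ IsSchurU U := by
  have hclosed : IsClosed {U : Ultrafilter ℕ | IsSchurU U} := by
    have : {U : Ultrafilter ℕ | IsSchurU U} =
        ⋂ A ∈ {A : Set ℕ | ¬ ∃ x ∈ A, ∃ y ∈ A, ∃ z ∈ A, x ≠ y ∧ x ≠ z ∧ y ≠ z ∧ x + y = z},
          {U : Ultrafilter ℕ | A ∈ U}ᶜ := by
      ext U
      simp only [Set.mem_setOf_eq, Set.mem_iInter, Set.mem_compl_iff, IsSchurU]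
      constructor
      · intro h A hA hAU; exact hA (h A hAU)
      · intro h A hAU; by_contra hc; exact h A hc hAU
    rw [this]
    exact isClosed_biInter fun A _ => (ultrafilter_isOpen_basic A).isClosed_compl
  obtain ⟨U, hUS, hUidem⟩ := exists_idempotent_in_compact_subsemigroup
    Ultrafilter.continuous_mul_left {U : Ultrafilter ℕ | IsSchurU U}
    exists_schur_ultrafilter hclosed.isCompact
    (fun x hx y hy => schur_mul hx hy)
  exact ⟨U, by rw [uprod_eq_mul]; exact hUidem, hUS⟩

/-- Any multiplicatively idempotent Schur ultrafilter witnesses injective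
partition regularity of `x + y - z·w`; in particular the polynomial
`x + y − zw` is injectively partition regular on ℕ. -/
theorem stmt17 :
    (∀ U : Ultrafilter ℕ, uprod U U = U →
      (∀ A ∈ U, ∃ x ∈ A, ∃ y ∈ A, ∃ z ∈ A, x ≠ y ∧ x ≠ z ∧ y ≠ z ∧ x + y = z) →
      ∀ A ∈ U, ∃ a ∈ A, ∃ b ∈ A, ∃ c ∈ A, ∃ d ∈ A,
        a ≠ b ∧ a ≠ c ∧ a ≠ d ∧ b ≠ c ∧ b ≠ d ∧ c ≠ d ∧ a + b = c * d) ∧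
    (∀ (r : ℕ) (col : ℕ → Fin r), ∃ a b c d : ℕ,
      0 < a ∧ 0 < b ∧ 0 < c ∧ 0 < d ∧
      a ≠ b ∧ a ≠ c ∧ a ≠ d ∧ b ≠ c ∧ b ≠ d ∧ c ≠ d ∧
      col a = col b ∧ col b = col c ∧ col c = col d ∧
      a + b = c * d) := by
  refine ⟨main1, ?_⟩
  intro r col
  obtain ⟨U, hUidem, hUS⟩ := exists_mul_idem_schur
  have h1 : {n : ℕ | 1 ≤ n} ∈ U := by
    rcases U.mem_or_compl_mem {n : ℕ | 1 ≤ n} with h | h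
    · exact h
    · exact absurd h (schur_not_finite hUS ((Set.finite_Iio 1).subset fun n hn => by simpa using hn))
  obtain ⟨i, -, hi⟩ := (U.map col).eq_pure_of_finite_mem Set.finite_univ Filter.univ_mem
  have hcol : col ⁻¹' {i} ∈ U := by
    rw [← Ultrafilter.mem_map, hi]
    rfl
  obtain ⟨a, ha, b, hb, c, hc, d, hd, h⟩ :=
    main1 U hUidem hUS (col ⁻¹' {i} ∩ {n | 1 ≤ n}) (Filter.inter_mem hcol h1)
  refine ⟨a, b, c, d, ha.2, hb.2, hc.2, hd.2, h.1, h.2.1, h.2.2.1, h.2.2.2.1, h.2.2.2.2.1,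
    h.2.2.2.2.2.1, ?_, ?_, ?_, h.2.2.2.2.2.2⟩
  · rw [show col a = i from ha.1, show col b = i from hb.1]
  · rw [show col b = i from hb.1, show col c = i from hc.1]
  · rw [show col c = i from hc.1, show col d = i from hd.1]
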